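/- Let x₁ be uniform on the integer interval [α₁, β₁] and x₂ be uniform on the integer interval [α₂, β₂], independent of x₁, where 0 ≤ α₂ ≤ β₂ ≤ β₁ − α₁ are integers. Then d_TV(x₁, x₁ + x₂) ≤ β₂ / (β₁ − α₁ + 1). -/

import Mathlib

/-- Probability mass function of the uniform distribution on the integers `{α,...,β}`. -/
noncomputable def unifPMF (α β : ℤ) : ℤ → ℝ :=
  fun k => if α ≤ k ∧ k ≤ β then 1 / ((β : ℝ) - α + 1) else 0

/-- PMF of the sum of two independent random variables with pmfs `p`, `q`
(convolution). -/
noncomputable def convPMF (p q : ℤ → ℝ) : ℤ → ℝ :=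
  fun k => ∑' i : ℤ, p (k - i) * q i

/-- If `x₁ ~ Uni[α₁,β₁]` and `x₂ ~ Uni[α₂,β₂]` are independent with
`0 ≤ α₂ ≤ β₂ ≤ β₁ − α₁`, then `d_TV(x₁, x₁+x₂) ≤ β₂/(β₁−α₁+1)`. -/

theorem tv_uniform_shift (α₁ β₁ α₂ β₂ : ℤ)
    (h0 : 0 ≤ α₂) (h1 : α₂ ≤ β₂) (h2 : β₂ ≤ β₁ - α₁) :
    (1/2 : ℝ) * ∑' k : ℤ, |unifPMF α₁ β₁ k - convPMF (unifPMF α₁ β₁) (unifPMF α₂ β₂) k| ≤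
      (β₂ : ℝ) / ((β₁ : ℝ) - α₁ + 1) := by
  have hab : α₁ ≤ β₁ := by omega
  set N : ℝ := (β₁ : ℝ) - α₁ + 1 with hN
  set M : ℝ := (β₂ : ℝ) - α₂ + 1 with hM
  have hNpos : 0 < N := by
    rw [hN]; have : (α₁:ℝ) ≤ β₁ := by exact_mod_cast hab
    linarith
  have hMpos : 0 < M := by
    rw [hM]; have : (α₂:ℝ) ≤ β₂ := by exact_mod_cast h1
    linarith
  set p := unifPMF α₁ β₁ with hp
  set q := unifPMF α₂ β₂ with hq
  set I := Finset.Icc α₂ β₂ with hI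
  set K := Finset.Icc α₁ (β₁ + β₂) with hK
  have hcardI : ((I.card : ℝ)) = M := by
    have h' : (I.card : ℤ) = β₂ + 1 - α₂ := by
      rw [hI, Int.card_Icc]; omega
    have h'' := congrArg (fun z : ℤ => (z : ℝ)) h'
    push_cast at h''
    rw [hM]; linarith
  have hqI : ∀ i ∈ I, q i = 1 / M := by
    intro i hi
    rw [hI, Finset.mem_Icc] at hi
    rw [hq, unifPMF, if_pos hi]
  have hq0 : ∀ i ∉ I, q i = 0 := by
    intro i hi
    rw [hI, Finset.mem_Icc] at hi
    rw [hq, unifPMF, if_neg hi]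
  have hconv : ∀ k, convPMF p q k = ∑ i ∈ I, p (k - i) * (1 / M) := by
    intro k
    rw [convPMF]
    rw [tsum_eq_sum (s := I) (fun i hi => by rw [hq0 i hi, mul_zero])]
    exact Finset.sum_congr rfl fun i hi => by rw [hqI i hi]
  have hdiff0 : ∀ k ∉ K, |p k - convPMF p q k| = 0 := by
    intro k hk
    rw [hK, Finset.mem_Icc] at hk
    have hpk : p k = 0 := by
      rw [hp, unifPMF]; rw [if_neg]; omega
    have hck : convPMF p q k = 0 := by
      rw [hconv]
      apply Finset.sum_eq_zero
      intro i hi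
      rw [hI, Finset.mem_Icc] at hi
      rw [hp, unifPMF]; rw [if_neg (by omega), zero_mul]
    rw [hpk, hck, sub_zero, abs_zero]
  rw [tsum_eq_sum (s := K) hdiff0]
  -- pointwise bound
  have hpt : ∀ k, |p k - convPMF p q k| ≤ (∑ i ∈ I, |p k - p (k - i)|) * (1 / M) := by
    intro k
    have heq : p k - convPMF p q k = ∑ i ∈ I, (p k - p (k - i)) * (1 / M) := by
      rw [hconv]
      rw [Finset.sum_congr rfl (fun i _ => sub_mul (p k) (p (k-i)) (1/M))]
      rw [Finset.sum_sub_distrib, Finset.sum_const, nsmul_eq_mul, hcardI]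
      field_simp
    rw [heq, ← Finset.sum_mul, abs_mul, abs_of_pos (by positivity : (0:ℝ) < 1/M)]
    gcongr
    exact Finset.abs_sum_le_sum_abs _ _
  -- per-shift bound
  have hshift : ∀ i ∈ I, ∑ k ∈ K, |p k - p (k - i)| ≤ 2 * β₂ / N := by
    intro i hi
    rw [hI, Finset.mem_Icc] at hi
    have hiR : (i:ℝ) ≤ β₂ := by exact_mod_cast hi.2
    have hi0 : (0:ℤ) ≤ i := le_trans h0 hi.1
    have hpt2 : ∀ k, |p k - p (k - i)| ≤
        (if k ∈ Finset.Icc α₁ (α₁ + i - 1) then 1/N else 0) +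
        (if k ∈ Finset.Icc (β₁+1) (β₁+i) then 1/N else 0) := by
      intro k
      simp only [Finset.mem_Icc, hp, unifPMF]
      have h1N : (0:ℝ) < 1/N := by positivity
      rw [← hN]
      split_ifs <;> first | (exfalso; omega) | (simp only [sub_self, abs_zero, sub_zero, zero_sub, abs_neg, abs_of_pos h1N]; linarith)
    have hsub1 : Finset.Icc α₁ (α₁ + i - 1) ⊆ K :=
      hK ▸ Finset.Icc_subset_Icc le_rfl (by omega)
    have hsub2 : Finset.Icc (β₁+1) (β₁+i) ⊆ K :=
      hK ▸ Finset.Icc_subset_Icc (by omega) (by omega)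
    have hc1 : (((Finset.Icc α₁ (α₁ + i - 1)).card : ℕ) : ℝ) = i := by
      have h' : ((Finset.Icc α₁ (α₁ + i - 1)).card : ℤ) = i := by
        rw [Int.card_Icc]; omega
      exact_mod_cast h'
    have hc2 : (((Finset.Icc (β₁+1) (β₁+i)).card : ℕ) : ℝ) = i := by
      have h' : ((Finset.Icc (β₁+1) (β₁+i)).card : ℤ) = i := by
        rw [Int.card_Icc]; omega
      exact_mod_cast h'
    calc ∑ k ∈ K, |p k - p (k - i)|
        ≤ ∑ k ∈ K, ((if k ∈ Finset.Icc α₁ (α₁ + i - 1) then 1/N else 0) +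
            (if k ∈ Finset.Icc (β₁+1) (β₁+i) then 1/N else 0)) :=
          Finset.sum_le_sum fun k _ => hpt2 k
      _ = (i:ℝ) * (1/N) + (i:ℝ) * (1/N) := by
          rw [Finset.sum_add_distrib, Finset.sum_ite_mem, Finset.sum_ite_mem,
            Finset.inter_eq_right.mpr hsub1, Finset.inter_eq_right.mpr hsub2,
            Finset.sum_const, Finset.sum_const, nsmul_eq_mul, nsmul_eq_mul, hc1, hc2]
      _ ≤ (β₂:ℝ) * (1/N) + (β₂:ℝ) * (1/N) := by
          have h1N : (0:ℝ) ≤ 1/N := by positivity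
          gcongr
      _ = 2 * β₂ / N := by ring
  have hmain : ∑ k ∈ K, |p k - convPMF p q k| ≤ 2 * β₂ / N := by
    calc ∑ k ∈ K, |p k - convPMF p q k|
        ≤ ∑ k ∈ K, (∑ i ∈ I, |p k - p (k - i)|) * (1 / M) :=
          Finset.sum_le_sum fun k _ => hpt k
      _ = (∑ i ∈ I, ∑ k ∈ K, |p k - p (k - i)|) * (1 / M) := by
          rw [← Finset.sum_mul, Finset.sum_comm]
      _ ≤ (∑ _i ∈ I, 2 * β₂ / N) * (1 / M) := by
          gcongr with i hi
          exact hshift i hi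
      _ = 2 * β₂ / N := by
          rw [Finset.sum_const, nsmul_eq_mul, hcardI, mul_one_div,
            mul_comm M (2 * (β₂:ℝ) / N), mul_div_assoc, div_self hMpos.ne', mul_one]
  have h2d : 2 * (β₂:ℝ) / N = 2 * ((β₂:ℝ) / N) := by ring
  linarith
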